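/- Suppose a measurable function W : Ω × ℝ^{n×n} → [0,∞) admits a uniform quadratic expansion at the identity with quadratic term Q, i.e. for every η > 0 there is δ > 0 such that |W(x, Id + G) - Q(x,G)| ≤ η|G|² whenever |G| ≤ δ, for a.e. x. If g_h ∈ W^{1,∞}(Ω;ℝ^n) satisfy the uniform bound ‖∇g_h‖_∞ ≤ h^{-1/2} and ∇g_h → ∇g strongly in L²(Ω;ℝ^{n×n}), then (1/h²)∫_Ω W(x, Id + h∇g_h(x)) dx → ∫_Ω Q(x, ∇g(x)) dx as h → 0, where Q(x,·) is a quadratic form with 0 ≤ Q(x,G) ≤ c|G|² uniformly in x. -/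

import Mathlib

open MeasureTheory Filter

set_option maxHeartbeats 1000000

/-- Frobenius norm of a real square matrix. -/
noncomputable def frob {n : ℕ} (M : Matrix (Fin n) (Fin n) ℝ) : ℝ :=
  Real.sqrt (∑ i, ∑ j, (M i j) ^ 2)

section FrobAux
variable {n : ℕ}

lemma frob_nonneg (M : Matrix (Fin n) (Fin n) ℝ) : 0 ≤ frob M := Real.sqrt_nonneg _

lemma frob_sq (M : Matrix (Fin n) (Fin n) ℝ) : frob M ^ 2 = ∑ i, ∑ j, (M i j) ^ 2 := by
  rw [frob, Real.sq_sqrt]; positivity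

lemma frob_eq_norm (M : Matrix (Fin n) (Fin n) ℝ) :
    frob M = ‖((WithLp.equiv 2 ((Fin n × Fin n) → ℝ)).symm fun p => M p.1 p.2)‖ := by
  rw [EuclideanSpace.norm_eq, frob]
  congr 1
  rw [Fintype.sum_prod_type]
  refine Finset.sum_congr rfl fun i _ => Finset.sum_congr rfl fun j _ => ?_
  rw [Real.norm_eq_abs, sq_abs]; rfl

lemma frob_add_le (A B : Matrix (Fin n) (Fin n) ℝ) : frob (A + B) ≤ frob A + frob B := by
  rw [frob_eq_norm, frob_eq_norm, frob_eq_norm]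
  have : ((WithLp.equiv 2 ((Fin n × Fin n) → ℝ)).symm fun p => (A + B) p.1 p.2)
      = ((WithLp.equiv 2 ((Fin n × Fin n) → ℝ)).symm fun p => A p.1 p.2)
        + ((WithLp.equiv 2 ((Fin n × Fin n) → ℝ)).symm fun p => B p.1 p.2) := rfl
  rw [this]; exact norm_add_le _ _

lemma frob_smul (a : ℝ) (A : Matrix (Fin n) (Fin n) ℝ) : frob (a • A) = |a| * frob A := by
  rw [frob_eq_norm, frob_eq_norm]
  have : ((WithLp.equiv 2 ((Fin n × Fin n) → ℝ)).symm fun p => (a • A) p.1 p.2)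
      = a • ((WithLp.equiv 2 ((Fin n × Fin n) → ℝ)).symm fun p => A p.1 p.2) := rfl
  rw [this, norm_smul, Real.norm_eq_abs]

lemma frob_neg (A : Matrix (Fin n) (Fin n) ℝ) : frob (-A) = frob A := by
  have : -A = (-1 : ℝ) • A := by simp
  rw [this, frob_smul]; simp

lemma frob_sub_le (A B : Matrix (Fin n) (Fin n) ℝ) : frob (A - B) ≤ frob A + frob B := by
  rw [sub_eq_add_neg]
  exact (frob_add_le A (-B)).trans (by rw [frob_neg])

lemma frob_continuous : Continuous (frob (n := n)) := by
  unfold frob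
  refine Real.continuous_sqrt.comp ?_
  refine continuous_finset_sum _ fun i _ => continuous_finset_sum _ fun j _ => ?_
  exact ((continuous_apply j).comp (continuous_apply i)).pow 2

lemma frob_zero : frob (0 : Matrix (Fin n) (Fin n) ℝ) = 0 := by
  simp [frob]

lemma polar_bound (Q : QuadraticForm ℝ (Matrix (Fin n) (Fin n) ℝ)) {c : ℝ} (hc : 0 ≤ c)
    (hQ : ∀ M, 0 ≤ Q M ∧ Q M ≤ c * frob M ^ 2) (A B : Matrix (Fin n) (Fin n) ℝ) :
    |QuadraticMap.polar Q A B| ≤ 2 * c * frob A * frob B := by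
  have key : ∀ t : ℝ, 0 ≤ Q A * (t * t) + QuadraticMap.polar Q A B * t + Q B := by
    intro t
    have h0 := (hQ (t • A + B)).1
    have e : Q (t • A + B) = Q A * (t * t) + QuadraticMap.polar Q A B * t + Q B := by
      have h1 : Q (t • A + B) = QuadraticMap.polar Q (t • A) B + Q (t • A) + Q B := by
        simp [QuadraticMap.polar]; ring
      rw [h1, QuadraticMap.polar_smul_left, QuadraticMap.map_smul]
      simp [smul_eq_mul]; ring
    linarith [e ▸ h0]
  have hd := discrim_le_zero key
  rw [discrim] at hd
  have hA := hQ A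
  have hB := hQ B
  have hsq : (QuadraticMap.polar Q A B) ^ 2 ≤ (2 * c * frob A * frob B) ^ 2 := by
    nlinarith [frob_nonneg A, frob_nonneg B, hA.1, hA.2, hB.1, hB.2,
      mul_le_mul hA.2 hB.2 hB.1 (mul_nonneg hc (sq_nonneg _)),
      sq_nonneg (frob A), sq_nonneg (frob B)]
  calc |QuadraticMap.polar Q A B| = Real.sqrt ((QuadraticMap.polar Q A B) ^ 2) :=
        (Real.sqrt_sq_eq_abs _).symm
    _ ≤ Real.sqrt ((2 * c * frob A * frob B) ^ 2) := Real.sqrt_le_sqrt hsq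
    _ = 2 * c * frob A * frob B := Real.sqrt_sq
        (mul_nonneg (mul_nonneg (mul_nonneg two_pos.le hc) (frob_nonneg A)) (frob_nonneg B))

lemma quad_diff (Q : QuadraticForm ℝ (Matrix (Fin n) (Fin n) ℝ)) {c : ℝ} (hc : 0 ≤ c)
    (hQ : ∀ M, 0 ≤ Q M ∧ Q M ≤ c * frob M ^ 2) (A B : Matrix (Fin n) (Fin n) ℝ) :
    |Q A - Q B| ≤ c * frob (A - B) ^ 2 + 2 * c * frob (A - B) * frob B := by
  have e : Q A - Q B = Q (A - B) + QuadraticMap.polar Q (A - B) B := by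
    have h1 : A = (A - B) + B := by abel
    nth_rewrite 1 [h1]
    simp [QuadraticMap.polar]; ring
  rw [e]
  have h1 := (hQ (A - B)).1
  have h2 := (hQ (A - B)).2
  have h3 := polar_bound Q hc hQ (A - B) B
  calc |Q (A - B) + QuadraticMap.polar Q (A - B) B|
      ≤ |Q (A - B)| + |QuadraticMap.polar Q (A - B) B| := abs_add_le _ _
    _ ≤ c * frob (A - B) ^ 2 + 2 * c * frob (A - B) * frob B := by
        rw [abs_of_nonneg h1]; linarith

lemma quad_continuous (Q : QuadraticForm ℝ (Matrix (Fin n) (Fin n) ℝ)) {c : ℝ} (hc : 0 ≤ c)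
    (hQ : ∀ M, 0 ≤ Q M ∧ Q M ≤ c * frob M ^ 2) : Continuous fun M => Q M := by
  rw [continuous_iff_continuousAt]
  intro B
  rw [ContinuousAt, tendsto_iff_dist_tendsto_zero]
  have hb : ∀ A, dist (Q A) (Q B) ≤ c * frob (A - B) ^ 2 + 2 * c * frob (A - B) * frob B := by
    intro A; rw [Real.dist_eq]; exact quad_diff Q hc hQ A B
  have hg : Tendsto (fun A => c * frob (A - B) ^ 2 + 2 * c * frob (A - B) * frob B)
      (nhds B) (nhds 0) := by
    have hcont : Continuous fun A : Matrix (Fin n) (Fin n) ℝ =>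
        c * frob (A - B) ^ 2 + 2 * c * frob (A - B) * frob B := by
      have h1 : Continuous fun A : Matrix (Fin n) (Fin n) ℝ => frob (A - B) :=
        frob_continuous.comp (continuous_id.sub continuous_const)
      fun_prop
    have h0 : (fun A : Matrix (Fin n) (Fin n) ℝ =>
        c * frob (A - B) ^ 2 + 2 * c * frob (A - B) * frob B) B = 0 := by
      simp [frob_zero]
    have := hcont.tendsto B
    simp only [sub_self, frob_zero] at this
    norm_num at this
    exact this
  exact squeeze_zero (fun A => dist_nonneg) hb hg

end FrobAux

instance matrixMeasurableSpace {m n : Type*} {α : Type*} [MeasurableSpace α] :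
    MeasurableSpace (Matrix m n α) := inferInstanceAs (MeasurableSpace (m → n → α))

instance matrixBorelSpace {m n : Type*} [Countable m] [Countable n] :
    BorelSpace (Matrix m n ℝ) := inferInstanceAs (BorelSpace (m → n → ℝ))

instance matrixMetrizable {m n : Type*} [Countable m] [Countable n] :
    TopologicalSpace.MetrizableSpace (Matrix m n ℝ) :=
  inferInstanceAs (TopologicalSpace.MetrizableSpace (m → n → ℝ))

instance matrixSecondCountable {m n : Type*} [Countable m] [Countable n] :
    SecondCountableTopology (Matrix m n ℝ) :=
  inferInstanceAs (SecondCountableTopology (m → n → ℝ))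

lemma caratheodory_measurable {n : ℕ} {F : EuclideanSpace ℝ (Fin n) → Matrix (Fin n) (Fin n) ℝ → ℝ}
    (hmeas : ∀ M, Measurable fun x => F x M) (hcont : ∀ x, Continuous fun M => F x M)
    {D : EuclideanSpace ℝ (Fin n) → Matrix (Fin n) (Fin n) ℝ} (hD : Measurable D) :
    Measurable fun x => F x (D x) := by
  have h := measurable_uncurry_of_continuous_of_measurable
      (u := fun M x => F x M) (fun x => hcont x) (fun M => hmeas M)
  exact h.comp (hD.prodMk measurable_id)

/-- If `W` admits a uniform quadratic expansion at the identity with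
quadratic term `Q`, `‖∇g_h‖_∞ ≤ h^{-1/2}` and `∇g_h → ∇g` strongly in `L²`, then
`(1/h²)∫_Ω W(x, Id + h∇g_h) dx → ∫_Ω Q(x, ∇g) dx` as `h ↓ 0`. The gradients are
represented directly as matrix fields `Dg h` and `Dg₀`. -/
theorem stmt_2 {n : ℕ} (Ω : Set (EuclideanSpace ℝ (Fin n)))
    (hΩo : IsOpen Ω) (hΩb : Bornology.IsBounded Ω)
    (W : EuclideanSpace ℝ (Fin n) → Matrix (Fin n) (Fin n) ℝ → ℝ)
    (Qf : EuclideanSpace ℝ (Fin n) → QuadraticForm ℝ (Matrix (Fin n) (Fin n) ℝ))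
    (c : ℝ) (hc : 0 < c)
    -- Carathéodory and nonnegativity assumptions
    (hWnn : ∀ x M, 0 ≤ W x M)
    (hWmeas : ∀ M, Measurable fun x => W x M)
    (hWcont : ∀ x, Continuous fun M => W x M)
    (hQmeas : ∀ M, Measurable fun x => Qf x M)
    (hQbound : ∀ x M, 0 ≤ Qf x M ∧ Qf x M ≤ c * frob M ^ 2)
    -- uniform quadratic expansion of W at the identity with quadratic term Q
    (hexp : ∀ η > (0 : ℝ), ∃ δ > (0 : ℝ), ∀ᵐ x ∂(volume.restrict Ω),
      ∀ G : Matrix (Fin n) (Fin n) ℝ, frob G ≤ δ →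
        |W x (1 + G) - Qf x G| ≤ η * frob G ^ 2)
    -- the (gradients of the) displacements
    (Dg : ℝ → EuclideanSpace ℝ (Fin n) → Matrix (Fin n) (Fin n) ℝ)
    (Dg₀ : EuclideanSpace ℝ (Fin n) → Matrix (Fin n) (Fin n) ℝ)
    (hDgmeas : ∀ h i j, Measurable fun x => Dg h x i j)
    (hDg₀meas : ∀ i j, Measurable fun x => Dg₀ x i j)
    (hDg₀L2 : Integrable (fun x => frob (Dg₀ x) ^ 2) (volume.restrict Ω))
    -- uniform bound ‖∇g_h‖_∞ ≤ h^{-1/2}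
    (hLinfty : ∀ h > (0 : ℝ), ∀ᵐ x ∂(volume.restrict Ω), frob (Dg h x) ≤ h ^ (-(1/2 : ℝ)))
    -- strong L² convergence of the gradients
    (hL2conv : Tendsto (fun h => ∫ x in Ω, frob (Dg h x - Dg₀ x) ^ 2)
      (nhdsWithin (0 : ℝ) (Set.Ioi 0)) (nhds 0)) :
    Tendsto (fun h : ℝ => (1 / h ^ 2) * ∫ x in Ω, W x (1 + h • Dg h x))
      (nhdsWithin (0 : ℝ) (Set.Ioi 0)) (nhds (∫ x in Ω, Qf x (Dg₀ x))) := by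
  classical
  haveI : IsFiniteMeasure (volume.restrict Ω) := by
    constructor
    rw [Measure.restrict_apply_univ]
    exact hΩb.measure_lt_top
  -- measurability of matrix-valued maps
  have hDgM : ∀ h : ℝ, Measurable fun x => Dg h x := fun h =>
    measurable_pi_lambda _ fun i => measurable_pi_lambda _ fun j => hDgmeas h i j
  have hDg₀M : Measurable fun x => Dg₀ x :=
    measurable_pi_lambda _ fun i => measurable_pi_lambda _ fun j => hDg₀meas i j
  have hDsub : ∀ h : ℝ, Measurable fun x => Dg h x - Dg₀ x := fun h =>
    measurable_pi_lambda _ fun i => measurable_pi_lambda _ fun j => by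
      simp only [Matrix.sub_apply]
      exact (hDgmeas h i j).sub (hDg₀meas i j)
  have hMat : ∀ h : ℝ, Measurable fun x => (1 : Matrix (Fin n) (Fin n) ℝ) + h • Dg h x := by
    intro h
    refine measurable_pi_lambda _ fun i => measurable_pi_lambda _ fun j => ?_
    simp only [Matrix.add_apply, Matrix.smul_apply, smul_eq_mul]
    exact measurable_const.add ((hDgmeas h i j).const_mul h)
  have hQcomp : ∀ (D : EuclideanSpace ℝ (Fin n) → Matrix (Fin n) (Fin n) ℝ),
      Measurable D → Measurable fun x => Qf x (D x) := fun D hD =>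
    caratheodory_measurable hQmeas (fun x => quad_continuous (Qf x) hc.le (hQbound x)) hD
  have hQDg : ∀ h : ℝ, Measurable fun x => Qf x (Dg h x) := fun h => hQcomp _ (hDgM h)
  have hQDg₀m : Measurable fun x => Qf x (Dg₀ x) := hQcomp _ hDg₀M
  have hWm : ∀ h : ℝ, Measurable fun x => W x (1 + h • Dg h x) := fun h =>
    caratheodory_measurable hWmeas hWcont (hMat h)
  have hfrobDg : ∀ h : ℝ, Measurable fun x => frob (Dg h x) := fun h =>
    frob_continuous.measurable.comp (hDgM h)
  have hfrobD : ∀ h : ℝ, Measurable fun x => frob (Dg h x - Dg₀ x) := fun h =>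
    frob_continuous.measurable.comp (hDsub h)
  -- constants
  set J₀ := ∫ x in Ω, Qf x (Dg₀ x) with hJ₀def
  set K := ∫ x in Ω, frob (Dg₀ x) ^ 2 with hKdef
  have hK0 : 0 ≤ K := integral_nonneg fun x => sq_nonneg _
  have hQDg₀int : Integrable (fun x => Qf x (Dg₀ x)) (volume.restrict Ω) := by
    refine (hDg₀L2.const_mul c).mono' hQDg₀m.aestronglyMeasurable ?_
    refine Eventually.of_forall fun x => ?_
    rw [Real.norm_eq_abs, abs_of_nonneg (hQbound x _).1]
    exact (hQbound x _).2
  rw [Metric.tendsto_nhds]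
  intro ε hε
  set η := ε / (8 * (K + 1)) with hηdef
  have hη0 : 0 < η := div_pos hε (by nlinarith)
  obtain ⟨δ, hδ0, hae⟩ := hexp η hη0
  set εB := ε / (8 * c * (K + 1)) with hεBdef
  have hεB0 : 0 < εB := div_pos hε (by nlinarith)
  have hCB : 0 < c + c / εB := add_pos hc (div_pos hc hεB0)
  have ev1 : Set.Ioc (0:ℝ) (δ ^ 2) ∈ nhdsWithin (0:ℝ) (Set.Ioi 0) :=
    Ioc_mem_nhdsGT_of_mem ⟨le_refl 0, by positivity⟩
  have ev2 := hL2conv.eventually (eventually_le_nhds zero_lt_one)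
  have ev3 := hL2conv.eventually
    (eventually_lt_nhds (show (0:ℝ) < ε / 8 / (c + c / εB) from div_pos (by linarith) hCB))
  filter_upwards [ev1, ev2, ev3] with h hIoc hE1 hEsmall
  obtain ⟨h0, hδ2⟩ := hIoc
  have hs0 : 0 < Real.sqrt h := Real.sqrt_pos.2 h0
  have hs2 : Real.sqrt h ^ 2 = h := Real.sq_sqrt h0.le
  have hsδ : Real.sqrt h ≤ δ :=
    (Real.sqrt_le_sqrt hδ2).trans_eq (Real.sqrt_sq hδ0.le)
  have hhs : h * (Real.sqrt h)⁻¹ = Real.sqrt h := by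
    rw [← hs2]; field_simp; rw [Real.sqrt_sq hs0.le]
  have hbd : ∀ᵐ x ∂(volume.restrict Ω), frob (Dg h x) ≤ (Real.sqrt h)⁻¹ := by
    have hrw : h ^ (-(1/2 : ℝ)) = (Real.sqrt h)⁻¹ := by
      rw [Real.rpow_neg h0.le, ← Real.sqrt_eq_rpow]
    have := hLinfty h h0
    rwa [hrw] at this
  -- integrability for this h
  have hKhint : Integrable (fun x => frob (Dg h x) ^ 2) (volume.restrict Ω) := by
    refine (integrable_const (((Real.sqrt h)⁻¹) ^ 2)).mono'
      ((hfrobDg h).pow_const 2).aestronglyMeasurable ?_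
    filter_upwards [hbd] with x hx
    rw [Real.norm_eq_abs, abs_of_nonneg (sq_nonneg _)]
    exact pow_le_pow_left₀ (frob_nonneg _) hx 2
  have hEhint : Integrable (fun x => frob (Dg h x - Dg₀ x) ^ 2) (volume.restrict Ω) := by
    refine ((hKhint.const_mul 2).add (hDg₀L2.const_mul 2)).mono'
      ((hfrobD h).pow_const 2).aestronglyMeasurable ?_
    refine Eventually.of_forall fun x => ?_
    simp only [Pi.add_apply]
    rw [Real.norm_eq_abs, abs_of_nonneg (sq_nonneg _)]
    have ht := frob_sub_le (Dg h x) (Dg₀ x)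
    have h2 : frob (Dg h x - Dg₀ x) ^ 2 ≤ (frob (Dg h x) + frob (Dg₀ x)) ^ 2 :=
      pow_le_pow_left₀ (frob_nonneg _) ht 2
    nlinarith [h2, sq_nonneg (frob (Dg h x) - frob (Dg₀ x))]
  set Eh := ∫ x in Ω, frob (Dg h x - Dg₀ x) ^ 2 with hEhdef
  have hEh0 : 0 ≤ Eh := integral_nonneg fun x => sq_nonneg _
  set Kh := ∫ x in Ω, frob (Dg h x) ^ 2 with hKhdef
  have hKh0 : 0 ≤ Kh := integral_nonneg fun x => sq_nonneg _
  have hKhle : Kh ≤ 2 * Eh + 2 * K := by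
    have hpt : ∀ x, frob (Dg h x) ^ 2
        ≤ 2 * frob (Dg h x - Dg₀ x) ^ 2 + 2 * frob (Dg₀ x) ^ 2 := by
      intro x
      have ht := frob_add_le (Dg h x - Dg₀ x) (Dg₀ x)
      rw [sub_add_cancel] at ht
      have h2 : frob (Dg h x) ^ 2 ≤ (frob (Dg h x - Dg₀ x) + frob (Dg₀ x)) ^ 2 :=
        pow_le_pow_left₀ (frob_nonneg _) ht 2
      nlinarith [h2, sq_nonneg (frob (Dg h x - Dg₀ x) - frob (Dg₀ x))]
    have hmono : (∫ x in Ω, frob (Dg h x) ^ 2)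
        ≤ ∫ x in Ω, (2 * frob (Dg h x - Dg₀ x) ^ 2 + 2 * frob (Dg₀ x) ^ 2) :=
      integral_mono hKhint ((hEhint.const_mul 2).add (hDg₀L2.const_mul 2)) hpt
    rw [integral_add (hEhint.const_mul 2) (hDg₀L2.const_mul 2),
      integral_const_mul, integral_const_mul] at hmono
    rw [hKhdef, hEhdef, hKdef]
    exact hmono
  have hQDgint : Integrable (fun x => Qf x (Dg h x)) (volume.restrict Ω) := by
    refine (hKhint.const_mul c).mono' (hQDg h).aestronglyMeasurable ?_
    refine Eventually.of_forall fun x => ?_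
    rw [Real.norm_eq_abs, abs_of_nonneg (hQbound x _).1]
    exact (hQbound x _).2
  -- smallness of h • Dg h x
  have hsmall : ∀ᵐ x ∂(volume.restrict Ω),
      frob (h • Dg h x) = h * frob (Dg h x) ∧ frob (h • Dg h x) ≤ δ := by
    filter_upwards [hbd] with x hx
    have e1 : frob (h • Dg h x) = h * frob (Dg h x) := by
      rw [frob_smul, abs_of_pos h0]
    refine ⟨e1, ?_⟩
    rw [e1]
    calc h * frob (Dg h x) ≤ h * (Real.sqrt h)⁻¹ :=
          mul_le_mul_of_nonneg_left hx h0.le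
      _ = Real.sqrt h := hhs
      _ ≤ δ := hsδ
  have hWint : Integrable (fun x => W x (1 + h • Dg h x)) (volume.restrict Ω) := by
    refine (integrable_const ((c + η) * h ^ 2 * ((Real.sqrt h)⁻¹) ^ 2)).mono'
      (hWm h).aestronglyMeasurable ?_
    filter_upwards [hbd, hae, hsmall] with x hx hex hsm
    rw [Real.norm_eq_abs, abs_of_nonneg (hWnn _ _)]
    have hW2 := abs_le.1 (hex (h • Dg h x) hsm.2)
    have hQle := (hQbound x (h • Dg h x)).2
    have e1 := hsm.1
    have hf2 : frob (h • Dg h x) ^ 2 ≤ h ^ 2 * ((Real.sqrt h)⁻¹) ^ 2 := by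
      rw [e1, mul_pow]
      have := pow_le_pow_left₀ (frob_nonneg _) hx 2
      nlinarith [sq_nonneg h]
    nlinarith [hη0.le, hc.le, sq_nonneg (frob (h • Dg h x))]
  set Jh := ∫ x in Ω, Qf x (Dg h x) with hJhdef
  -- key 1: Taylor expansion estimate
  have key1 : |(1 / h ^ 2) * (∫ x in Ω, W x (1 + h • Dg h x)) - Jh| ≤ η * Kh := by
    have hQh2 : Integrable (fun x => h ^ 2 * Qf x (Dg h x)) (volume.restrict Ω) :=
      hQDgint.const_mul _
    have hsubint := hWint.sub hQh2
    have hptae : ∀ᵐ x ∂(volume.restrict Ω),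
        |W x (1 + h • Dg h x) - h ^ 2 * Qf x (Dg h x)| ≤ η * h ^ 2 * frob (Dg h x) ^ 2 := by
      filter_upwards [hae, hsmall] with x hex hsm
      have hq : Qf x (h • Dg h x) = h ^ 2 * Qf x (Dg h x) := by
        rw [QuadraticMap.map_smul, smul_eq_mul]; ring
      have h1 := hex (h • Dg h x) hsm.2
      rw [hq] at h1
      calc |W x (1 + h • Dg h x) - h ^ 2 * Qf x (Dg h x)| ≤ η * frob (h • Dg h x) ^ 2 := h1
        _ = η * h ^ 2 * frob (Dg h x) ^ 2 := by rw [hsm.1]; ring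
    have hstep1 : |∫ x in Ω, (W x (1 + h • Dg h x) - h ^ 2 * Qf x (Dg h x))|
        ≤ ∫ x in Ω, |W x (1 + h • Dg h x) - h ^ 2 * Qf x (Dg h x)| := by
      simpa [Real.norm_eq_abs] using
        norm_integral_le_integral_norm
          (fun x => W x (1 + h • Dg h x) - h ^ 2 * Qf x (Dg h x))
    have hstep2 : (∫ x in Ω, |W x (1 + h • Dg h x) - h ^ 2 * Qf x (Dg h x)|)
        ≤ ∫ x in Ω, η * h ^ 2 * frob (Dg h x) ^ 2 :=
      integral_mono_ae hsubint.abs (hKhint.const_mul (η * h ^ 2)) hptae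
    have hstep3 : (∫ x in Ω, η * h ^ 2 * frob (Dg h x) ^ 2)
        = η * h ^ 2 * ∫ x in Ω, frob (Dg h x) ^ 2 := integral_const_mul _ _
    have habs : |∫ x in Ω, (W x (1 + h • Dg h x) - h ^ 2 * Qf x (Dg h x))|
        ≤ η * h ^ 2 * Kh := by
      rw [hKhdef]
      calc |∫ x in Ω, (W x (1 + h • Dg h x) - h ^ 2 * Qf x (Dg h x))|
          ≤ ∫ x in Ω, |W x (1 + h • Dg h x) - h ^ 2 * Qf x (Dg h x)| := hstep1
        _ ≤ ∫ x in Ω, η * h ^ 2 * frob (Dg h x) ^ 2 := hstep2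
        _ = η * h ^ 2 * ∫ x in Ω, frob (Dg h x) ^ 2 := hstep3
    have hsplit : ∫ x in Ω, (W x (1 + h • Dg h x) - h ^ 2 * Qf x (Dg h x))
        = (∫ x in Ω, W x (1 + h • Dg h x)) - h ^ 2 * Jh := by
      rw [integral_sub hWint hQh2, integral_const_mul, hJhdef]
    have heq : (1 / h ^ 2) * (∫ x in Ω, W x (1 + h • Dg h x)) - Jh
        = (1 / h ^ 2) * ((∫ x in Ω, W x (1 + h • Dg h x)) - h ^ 2 * Jh) := by
      field_simp
    rw [heq, ← hsplit, abs_mul, abs_of_nonneg (by positivity : (0:ℝ) ≤ 1 / h ^ 2)]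
    calc (1 / h ^ 2) * |∫ x in Ω, (W x (1 + h • Dg h x) - h ^ 2 * Qf x (Dg h x))|
        ≤ (1 / h ^ 2) * (η * h ^ 2 * Kh) :=
          mul_le_mul_of_nonneg_left habs (by positivity)
      _ = η * Kh := by field_simp
  -- key 2: continuity of the quadratic integral
  have key2 : |Jh - J₀| ≤ (c + c / εB) * Eh + c * εB * K := by
    have hint2 : Integrable (fun x => Qf x (Dg h x) - Qf x (Dg₀ x)) (volume.restrict Ω) :=
      hQDgint.sub hQDg₀int
    have hR : Integrable (fun x => (c + c / εB) * frob (Dg h x - Dg₀ x) ^ 2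
        + c * εB * frob (Dg₀ x) ^ 2) (volume.restrict Ω) :=
      (hEhint.const_mul _).add (hDg₀L2.const_mul _)
    have hpt2 : ∀ x, |Qf x (Dg h x) - Qf x (Dg₀ x)|
        ≤ (c + c / εB) * frob (Dg h x - Dg₀ x) ^ 2 + c * εB * frob (Dg₀ x) ^ 2 := by
      intro x
      have hq := quad_diff (Qf x) hc.le (hQbound x) (Dg h x) (Dg₀ x)
      have hd := frob_nonneg (Dg h x - Dg₀ x)
      have hb := frob_nonneg (Dg₀ x)
      have h3 : 2 * c * frob (Dg h x - Dg₀ x) * frob (Dg₀ x) * εB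
          ≤ c * frob (Dg h x - Dg₀ x) ^ 2 + c * εB ^ 2 * frob (Dg₀ x) ^ 2 := by
        nlinarith [sq_nonneg (frob (Dg h x - Dg₀ x) - εB * frob (Dg₀ x)), hc.le]
      have h4 : 2 * c * frob (Dg h x - Dg₀ x) * frob (Dg₀ x)
          ≤ (c * frob (Dg h x - Dg₀ x) ^ 2 + c * εB ^ 2 * frob (Dg₀ x) ^ 2) / εB :=
        (le_div_iff₀ hεB0).2 (by linarith)
      have h5 : (c * frob (Dg h x - Dg₀ x) ^ 2 + c * εB ^ 2 * frob (Dg₀ x) ^ 2) / εB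
          = (c / εB) * frob (Dg h x - Dg₀ x) ^ 2 + c * εB * frob (Dg₀ x) ^ 2 := by
        field_simp
      rw [h5] at h4
      have : (c + c / εB) * frob (Dg h x - Dg₀ x) ^ 2 + c * εB * frob (Dg₀ x) ^ 2
          = c * frob (Dg h x - Dg₀ x) ^ 2
            + ((c / εB) * frob (Dg h x - Dg₀ x) ^ 2 + c * εB * frob (Dg₀ x) ^ 2) := by ring
      rw [this]
      linarith
    calc |Jh - J₀| = |∫ x in Ω, (Qf x (Dg h x) - Qf x (Dg₀ x))| := by
          rw [integral_sub hQDgint hQDg₀int, hJhdef, hJ₀def]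
      _ ≤ ∫ x in Ω, |Qf x (Dg h x) - Qf x (Dg₀ x)| := by
          simpa [Real.norm_eq_abs] using
            norm_integral_le_integral_norm (fun x => Qf x (Dg h x) - Qf x (Dg₀ x))
      _ ≤ ∫ x in Ω, ((c + c / εB) * frob (Dg h x - Dg₀ x) ^ 2 + c * εB * frob (Dg₀ x) ^ 2) :=
          integral_mono hint2.abs hR hpt2
      _ = (c + c / εB) * Eh + c * εB * K := by
          rw [integral_add (hEhint.const_mul _) (hDg₀L2.const_mul _), integral_const_mul,
            integral_const_mul, hEhdef, hKdef]
  -- conclusion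
  rw [Real.dist_eq]
  have htri : |(1 / h ^ 2) * (∫ x in Ω, W x (1 + h • Dg h x)) - J₀|
      ≤ |(1 / h ^ 2) * (∫ x in Ω, W x (1 + h • Dg h x)) - Jh| + |Jh - J₀| :=
    abs_sub_le _ _ _
  have hb1 : η * Kh ≤ ε / 4 := by
    have h1 : η * Kh ≤ η * (2 * 1 + 2 * K) := by
      have := hKhle
      nlinarith [hη0.le, hE1]
    have h2 : η * (2 * 1 + 2 * K) = ε / 4 := by
      rw [hηdef]; field_simp; ring
    linarith
  have hb2 : (c + c / εB) * Eh < ε / 8 := by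
    have := mul_lt_mul_of_pos_left hEsmall hCB
    have h2 : (c + c / εB) * (ε / 8 / (c + c / εB)) = ε / 8 := by
      field_simp
    linarith
  have hb3 : c * εB * K ≤ ε / 8 := by
    have h2 : c * εB * (K + 1) = ε / 8 := by
      rw [hεBdef]; field_simp
    nlinarith [hc.le, hεB0.le]
  linarith
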